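/- arXiv:math/0511313 — 9 statements merged into one kernel-verified Lean document; each statement's English description precedes it below -/
import Mathlib

section
/- Let A be an algebra, F and G maps from the set of reflexive admissible (compatible) binary relations on A to itself, and t a ternary term of A that is Mal'cev modulo F and G (i.e., whenever a R b with R reflexive admissible, we have a F(R) t(a,b,b) and t(a,a,b) G(R) b). If R is reflexive admissible, θ₁, θ₂, θ are arbitrary binary relations on A, S is reflexive admissible, and a R b, b θ₁ c, a θ₂ d, d S c, b θ d, then (a,c) ∈ F(R) ∘ cl(θ₂ ∪ θ ∪ θ₁) ∘ G(S), where cl(X) denotes the least admissible (compatible) relation containing X. -/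
structure Signature where
  symbols : Type
  arity : symbols → ℕ

structure UAAlgebra (σ : Signature) where
  carrier : Type
  ops : ∀ s, (Fin (σ.arity s) → carrier) → carrier

namespace Paper

variable {σ : Signature}

/-- Binary relations on the carrier of an algebra. -/
abbrev Rel (A : UAAlgebra σ) := A.carrier → A.carrier → Prop

/-- A relation is admissible (compatible) if it is preserved by all operations,
i.e. it is a subalgebra of `A × A`. -/
def Compatible (A : UAAlgebra σ) (R : Rel A) : Prop :=
  ∀ s (f g : Fin (σ.arity s) → A.carrier),
    (∀ j, R (f j) (g j)) → R (A.ops s f) (A.ops s g)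

/-- Reflexive and admissible. -/
def RAdm (A : UAAlgebra σ) (R : Rel A) : Prop :=
  Reflexive R ∧ Compatible A R

/-- Relational composition. -/
def comp {A : UAAlgebra σ} (R S : Rel A) : Rel A :=
  fun a c => ∃ b, R a b ∧ S b c

/-- `cl A X` : the least compatible relation containing `X`. -/
def cl (A : UAAlgebra σ) (X : Rel A) : Rel A :=
  fun a b => ∀ S : Rel A, Compatible A S → (∀ x y, X x y → S x y) → S a b

/-- The least reflexive compatible relation containing `X`. -/
def clRefl (A : UAAlgebra σ) (X : Rel A) : Rel A :=
  fun a b => ∀ S : Rel A, Reflexive S → Compatible A S → (∀ x y, X x y → S x y) → S a b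

/-- `altComp R S n` is `R ∘ₙ S`, the alternating composition
`R ∘ S ∘ R ∘ ⋯` with `n` factors (`n - 1` occurrences of `∘`);
by convention `R ∘₀ S` is the identity relation. -/
def altComp {A : UAAlgebra σ} (R S : Rel A) : ℕ → Rel A
  | 0 => Eq
  | n + 1 => comp R (altComp S R n)

/-- `relPow R n = Rⁿ`, with `R⁰` the identity relation. -/
def relPow {A : UAAlgebra σ} (R : Rel A) : ℕ → Rel A
  | 0 => Eq
  | n + 1 => comp R (relPow R n)

/-- The join `R + S = ⋃ₙ R ∘ₙ S`. -/
def join {A : UAAlgebra σ} (R S : Rel A) : Rel A :=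
  fun a b => ∃ n, altComp R S n a b

/-- Converse relation `R⁻`. -/
def conv {A : UAAlgebra σ} (R : Rel A) : Rel A :=
  fun a b => R b a

/-- Composition of a finite list of relations (empty list gives the identity). -/
def compList {A : UAAlgebra σ} : List (Rel A) → Rel A
  | [] => Eq
  | r :: l => comp r (compList l)

/-- Join of a family of relations: the union of all finite compositions of members. -/
def joinFam {A : UAAlgebra σ} {ι : Type} (R : ι → Rel A) : Rel A :=
  fun a b => ∃ l : List ι, compList (l.map R) a b

/-- The smallest congruence containing `X`. -/
def cg (A : UAAlgebra σ) (X : Rel A) : Rel A :=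
  fun a b => ∀ S : Rel A, Equivalence S → Compatible A S →
    (∀ x y, X x y → S x y) → S a b

/-- Terms of the signature `σ` in `n` variables. -/
inductive Term (σ : Signature) (n : ℕ) : Type
  | var : Fin n → Term σ n
  | op : ∀ s, (Fin (σ.arity s) → Term σ n) → Term σ n

/-- Evaluation of a term in an algebra under an environment. -/
def Term.eval {n : ℕ} (A : UAAlgebra σ) (env : Fin n → A.carrier) : Term σ n → A.carrier
  | .var k => env k
  | .op s args => A.ops s fun j => (args j).eval A env

/-- The ternary term operation induced by a ternary term. -/
def tApp (A : UAAlgebra σ) (t : Term σ 3) (a b c : A.carrier) : A.carrier :=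
  t.eval A ![a, b, c]

/-- `t` is Mal'cev modulo `F` and `G`: whenever `a R b` with `R` reflexive admissible,
`a F(R) t(a,b,b)` and `t(a,a,b) G(R) b`. -/
def MalcevMod (A : UAAlgebra σ) (F G : Rel A → Rel A) (t : Term σ 3) : Prop :=
  ∀ R : Rel A, RAdm A R → ∀ a b : A.carrier, R a b →
    F R a (tApp A t a b b) ∧ G R (tApp A t a a b) b

end Paper

open Paper
/-- Theorem 1(i): if `a R b θ₁ c`, `a θ₂ d S c` and `b θ d`, then
`(a,c) ∈ F(R) ∘ cl(θ₂ ∪ θ ∪ θ₁) ∘ G(S)`. -/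
theorem stmt0 {σ : Signature} (A : UAAlgebra σ) (F G : Rel A → Rel A)
    (hF : ∀ R, RAdm A R → RAdm A (F R)) (hG : ∀ R, RAdm A R → RAdm A (G R))
    (t : Term σ 3) (ht : MalcevMod A F G t)
    (R S : Rel A) (hR : RAdm A R) (hS : RAdm A S)
    (θ θ₁ θ₂ : Rel A) (a b c d : A.carrier)
    (hab : R a b) (hbc : θ₁ b c) (had : θ₂ a d) (hdc : S d c) (hbd : θ b d) :
    comp (F R) (comp (cl A (fun u v => θ₂ u v ∨ θ u v ∨ θ₁ u v)) (G S)) a c := by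
  have evalPres : ∀ (Q : Rel A), Compatible A Q → ∀ {n} (tm : Term σ n)
      (e1 e2 : Fin n → A.carrier), (∀ i, Q (e1 i) (e2 i)) →
      Q (tm.eval A e1) (tm.eval A e2) := by
    intro Q hQ n tm
    induction tm with
    | var k => intro e1 e2 h; exact h k
    | op s args ih => intro e1 e2 h; exact hQ s _ _ fun j => ih j e1 e2 h
  refine ⟨tApp A t a b b, (ht R hR a b hab).1, tApp A t d d c, ?_, (ht S hS d c hdc).2⟩
  intro Q hQ hX
  exact evalPres Q hQ t ![a, b, b] ![d, d, c] (by
    intro i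
    fin_cases i
    · exact hX _ _ (Or.inl had)
    · exact hX _ _ (Or.inr (Or.inl hbd))
    · exact hX _ _ (Or.inr (Or.inr hbc)))
end

section
/- Let A be an algebra with a term t Mal'cev modulo F and G, where F, G map reflexive admissible relations on A to reflexive admissible relations. Then for all reflexive admissible relations R, S on A and every binary relation θ on A: R ∘ θ ∘ S ⊆ F(R) ∘ cl((R ∘ θ) ∪ (θ ∘ S)) ∘ G(S), where cl denotes the least compatible relation containing the given set. -/
open Paper

theorem termCompat {σ : Signature} (A : UAAlgebra σ) (S : Rel A) (hS : Compatible A S)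
    {n : ℕ} (t : Term σ n) (e1 e2 : Fin n → A.carrier) (h : ∀ j, S (e1 j) (e2 j)) :
    S (t.eval A e1) (t.eval A e2) := by
  induction t with
  | var k => exact h k
  | op s args ih => exact hS s _ _ fun j => ih j

theorem clCompat {σ : Signature} (A : UAAlgebra σ) (X : Rel A) : Compatible A (cl A X) := by
  intro s f g h S hS hX
  exact hS s f g fun j => h j S hS hX

/-- Theorem 1(ii): `R ∘ θ ∘ S ⊆ F(R) ∘ cl((R ∘ θ) ∪ (θ ∘ S)) ∘ G(S)`. -/
theorem stmt1 {σ : Signature} (A : UAAlgebra σ) (F G : Rel A → Rel A)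
    (hF : ∀ R, RAdm A R → RAdm A (F R)) (hG : ∀ R, RAdm A R → RAdm A (G R))
    (t : Term σ 3) (ht : MalcevMod A F G t)
    (R S : Rel A) (hR : RAdm A R) (hS : RAdm A S) (θ : Rel A) :
    ∀ a c, comp R (comp θ S) a c →
      comp (F R) (comp (cl A (fun u v => comp R θ u v ∨ comp θ S u v)) (G S)) a c := by
  rintro a c ⟨b, hab, b', hbb', hb'c⟩
  refine ⟨tApp A t a b b, (ht R hR a b hab).1, tApp A t b' b' c, ?_, (ht S hS b' c hb'c).2⟩
  have base : ∀ x y, (fun u v => comp R θ u v ∨ comp θ S u v) x y →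
      cl A (fun u v => comp R θ u v ∨ comp θ S u v) x y := fun x y hxy S hS hX => hX x y hxy
  refine termCompat A _ (clCompat A _) t ![a, b, b] ![b', b', c] fun j => ?_
  fin_cases j
  · exact base a b' (Or.inl ⟨b, hab, hbb'⟩)
  · exact base b b' (Or.inr ⟨b', hbb', hS.1 b'⟩)
  · exact base b c (Or.inr ⟨b', hbb', hb'c⟩)
end

section
/- Let A be an algebra with a term t Mal'cev modulo F and G. Then for all reflexive admissible relations R, S on A: R ∘ S ⊆ F(R) ∘ cl(R ∪ S) ∘ G(S) ⊆ F(R) ∘ S ∘ R ∘ G(S). -/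
open Paper

/-- Compatible relations are preserved by term evaluation. -/
theorem compat_eval {σ : Signature} (A : UAAlgebra σ) (P : Rel A)
    (hP : Compatible A P) {n : ℕ} (e f : Fin n → A.carrier)
    (h : ∀ j, P (e j) (f j)) : ∀ tm : Term σ n, P (tm.eval A e) (tm.eval A f) := by
  intro tm
  induction tm with
  | var k => exact h k
  | op s args ih => exact hP s _ _ ih

/-- Composition of compatible relations is compatible. -/
theorem comp_compat {σ : Signature} (A : UAAlgebra σ) (P Q : Rel A)
    (hP : Compatible A P) (hQ : Compatible A Q) : Compatible A (comp P Q) := by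
  intro s f g h
  choose m hm1 hm2 using h
  exact ⟨A.ops s m, hP s f m hm1, hQ s m g hm2⟩

/-- Theorem 1(iii): `R ∘ S ⊆ F(R) ∘ cl(R ∪ S) ∘ G(S) ⊆ F(R) ∘ S ∘ R ∘ G(S)`. -/
theorem stmt2 {σ : Signature} (A : UAAlgebra σ) (F G : Rel A → Rel A)
    (hF : ∀ R, RAdm A R → RAdm A (F R)) (hG : ∀ R, RAdm A R → RAdm A (G R))
    (t : Term σ 3) (ht : MalcevMod A F G t)
    (R S : Rel A) (hR : RAdm A R) (hS : RAdm A S) :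
    (∀ a c, comp R S a c →
        comp (F R) (comp (cl A (fun u v => R u v ∨ S u v)) (G S)) a c) ∧
    (∀ a c, comp (F R) (comp (cl A (fun u v => R u v ∨ S u v)) (G S)) a c →
        comp (F R) (comp S (comp R (G S))) a c) := by
  constructor
  · rintro a c ⟨b, hab, hbc⟩
    refine ⟨tApp A t a b b, (ht R hR a b hab).1,
      tApp A t b b c, ?_, (ht S hS b c hbc).2⟩
    intro P hPc hPX
    have h1 : P a b := hPX a b (Or.inl hab)
    have h2 : P b b := hPX b b (Or.inl (hR.1 b))
    have h3 : P b c := hPX b c (Or.inr hbc)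
    exact compat_eval A P hPc ![a, b, b] ![b, b, c]
      (fun j => by fin_cases j <;> assumption) t
  · rintro a c ⟨x, hax, y, hxy, hyc⟩
    have hcl : comp S R x y := by
      refine hxy (comp S R) (comp_compat A S R hS.2 hR.2) ?_
      rintro u v (h | h)
      · exact ⟨u, hS.1 u, h⟩
      · exact ⟨v, h, hR.1 v⟩
    obtain ⟨z, hxz, hzy⟩ := hcl
    exact ⟨x, hax, z, hxz, y, hzy, hyc⟩
end

section
/- Let A be an algebra with a term t Mal'cev modulo F and G. For every n ≥ 0 and all reflexive admissible relations R, S on A: R ∘_{n+2} S ⊆ F(R) ∘ (cl(F(R) ∪ F(S)))^n ∘ cl(R ∪ S) ∘ (cl(G(R) ∪ G(S)))^n ∘ G(S•), where R ∘_m S denotes the alternating composition R ∘ S ∘ R ∘ S ⋯ with m−1 occurrences of ∘, T^n denotes the n-fold composition of T with itself (with T^0 the identity relation), and S• = S if n is even, S• = R if n is odd. -/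
open Paper
namespace Aux

variable {σ : Signature} {A : UAAlgebra σ}

lemma cl_compatible (X : Rel A) : Compatible A (cl A X) :=
  fun s f g h T hT hXT => hT s f g (fun j => h j T hT hXT)

lemma subset_cl {X : Rel A} {a b : A.carrier} (h : X a b) : cl A X a b :=
  fun _T _hT hXT => hXT a b h

lemma cl_mono {X Y : Rel A} (hXY : ∀ u v, X u v → Y u v) {a b : A.carrier}
    (h : cl A X a b) : cl A Y a b :=
  fun T hT hYT => h T hT (fun u v hu => hYT u v (hXY u v hu))

lemma eval_compat {C : Rel A} (hC : Compatible A C) {k : ℕ} (tm : Term σ k) :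
    ∀ (e e' : Fin k → A.carrier), (∀ i, C (e i) (e' i)) →
      C (tm.eval A e) (tm.eval A e') := by
  induction tm with
  | var i => intro e e' h; exact h i
  | op s args ih => intro e e' h; exact hC s _ _ (fun j => ih j e e' h)

lemma tApp_compat {C : Rel A} (hC : Compatible A C) {t : Term σ 3}
    {x x' y y' z z' : A.carrier} (h1 : C x x') (h2 : C y y') (h3 : C z z') :
    C (tApp A t x y z) (tApp A t x' y' z') := by
  apply eval_compat hC
  intro i
  fin_cases i <;> simpa

lemma relPow_mono {C D : Rel A} (h : ∀ a b, C a b → D a b) :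
    ∀ (n : ℕ) (a b : A.carrier), relPow C n a b → relPow D n a b := by
  intro n
  induction n with
  | zero => intro a b hab; exact hab
  | succ n ih => rintro a b ⟨w, hw, h'⟩; exact ⟨w, h a w hw, ih w b h'⟩

lemma relPow_snoc {C : Rel A} :
    ∀ (n : ℕ) (a b c : A.carrier), relPow C n a b → C b c → relPow C (n+1) a c := by
  intro n
  induction n with
  | zero => intro a b c hab hbc; cases hab; exact ⟨c, hbc, rfl⟩
  | succ n ih => rintro a b c ⟨w, hw, h'⟩ hbc; exact ⟨w, hw, ih w b c h' hbc⟩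

lemma relPow_pad {C : Rel A} (hrefl : ∀ x, C x x) {n : ℕ} {a b : A.carrier}
    (h : relPow C n a b) : relPow C (n+1) a b := ⟨a, hrefl a, h⟩

lemma relPow_tApp {C : Rel A} (hC : Compatible A C) {t : Term σ 3} :
    ∀ (n : ℕ) (x x' y y' z z' : A.carrier),
      relPow C n x x' → relPow C n y y' → relPow C n z z' →
      relPow C n (tApp A t x y z) (tApp A t x' y' z') := by
  intro n
  induction n with
  | zero => intro x x' y y' z z' h1 h2 h3; cases h1; cases h2; cases h3; rfl
  | succ n ih =>
      rintro x x' y y' z z' ⟨u, hu, h1⟩ ⟨v, hv, h2⟩ ⟨w, hw, h3⟩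
      exact ⟨tApp A t u v w, tApp_compat hC hu hv hw, ih _ _ _ _ _ _ h1 h2 h3⟩

lemma altComp_split_last :
    ∀ (n : ℕ) (R S : Rel A) (a c : A.carrier), altComp R S (n+1) a c →
      ∃ b, altComp R S n a b ∧ (if n % 2 = 0 then R else S) b c := by
  intro n
  induction n with
  | zero =>
      rintro R S a c ⟨b, hab, hbc⟩
      cases hbc
      exact ⟨a, rfl, by simpa using hab⟩
  | succ n ih =>
      rintro R S a c ⟨d, had, h'⟩
      obtain ⟨b, hb, hlast⟩ := ih S R d c h'
      refine ⟨b, ⟨d, had, hb⟩, ?_⟩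
      by_cases h0 : n % 2 = 0
      · have h1 : ¬ (n+1) % 2 = 0 := by omega
        rw [if_pos h0] at hlast
        rw [if_neg h1]
        exact hlast
      · have h1 : (n+1) % 2 = 0 := by omega
        rw [if_neg h0] at hlast
        rw [if_pos h1]
        exact hlast



lemma main {σ : Signature} (A : UAAlgebra σ) (F G : Rel A → Rel A)
    (hF : ∀ R, RAdm A R → RAdm A (F R)) (hG : ∀ R, RAdm A R → RAdm A (G R))
    (t : Term σ 3) (ht : MalcevMod A F G t) :
    ∀ (n : ℕ) (R S : Rel A), RAdm A R → RAdm A S →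
    ∀ a c, altComp R S (n + 2) a c →
      comp (F R)
        (comp (relPow (cl A (fun u v => F R u v ∨ F S u v)) n)
          (comp (cl A (fun u v => R u v ∨ S u v))
            (comp (relPow (cl A (fun u v => G R u v ∨ G S u v)) n)
              (G (if n % 2 = 0 then S else R))))) a c := by
  intro n
  induction n using Nat.strong_induction_on with
  | _ n ih =>
    cases n with
    | zero =>
      intro R S hR hS a c h
      obtain ⟨b, hab, b', hbc, heq⟩ := h
      cases heq
      refine ⟨tApp A t a b b, (ht R hR a b hab).1,
              tApp A t a b b, rfl,
              tApp A t b b c, ?_,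
              tApp A t b b c, rfl, ?_⟩
      · exact tApp_compat (cl_compatible _) (subset_cl (Or.inl hab))
          (subset_cl (Or.inl (hR.1 b))) (subset_cl (Or.inr hbc))
      · simpa using (ht S hS b c hbc).2
    | succ m =>
      intro R S hR hS a c h
      have h' : comp R (altComp S R (m+2)) a c := h
      obtain ⟨a₁, haa₁, h1⟩ := h'
      obtain ⟨b, h2, hL⟩ := altComp_split_last (m+1) S R a₁ c h1
      -- reflexivity of the three closures
      have hclF_refl : ∀ x, cl A (fun u v => F R u v ∨ F S u v) x x :=
        fun x => subset_cl (Or.inl ((hF R hR).1 x))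
      have hclM_refl : ∀ x, cl A (fun u v => R u v ∨ S u v) x x :=
        fun x => subset_cl (Or.inl (hR.1 x))
      have hclG_refl : ∀ x, cl A (fun u v => G R u v ∨ G S u v) x x :=
        fun x => subset_cl (Or.inl ((hG R hR).1 x))
      -- coordinate 0 : the path on a .. b  (chain of m+2 links, rels R,S)
      obtain ⟨x₀, hx₀, y₀, hFy₀, z₀, hmid₀, w₀, hGw₀, hGb₀⟩ :=
        ih m (by omega) R S hR hS a b ⟨a₁, haa₁, h2⟩
      have J0F : relPow (cl A (fun u v => F R u v ∨ F S u v)) (m+1) a y₀ :=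
        ⟨x₀, subset_cl (Or.inl hx₀), hFy₀⟩
      have hGb₀' : cl A (fun u v => G R u v ∨ G S u v) w₀ b := by
        apply subset_cl
        by_cases h0 : m % 2 = 0
        · rw [if_pos h0] at hGb₀; exact Or.inr hGb₀
        · rw [if_neg h0] at hGb₀; exact Or.inl hGb₀
      have J0G : relPow (cl A (fun u v => G R u v ∨ G S u v)) (m+1) z₀ b :=
        relPow_snoc m z₀ w₀ b hGw₀ hGb₀'
      -- coordinate 2 : the path on a₁ .. c (chain of m+2 links, rels S,R)
      obtain ⟨x₂, hx₂, y₂, hFy₂, z₂, hmid₂, w₂, hGw₂, hGc₂⟩ :=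
        ih m (by omega) S R hS hR a₁ c h1
      have hFy₂' : relPow (cl A (fun u v => F R u v ∨ F S u v)) m x₂ y₂ :=
        relPow_mono (fun _ _ hcl => cl_mono (fun _ _ hx => Or.symm hx) hcl) m x₂ y₂ hFy₂
      have J2F : relPow (cl A (fun u v => F R u v ∨ F S u v)) (m+1) a₁ y₂ :=
        ⟨x₂, subset_cl (Or.inr hx₂), hFy₂'⟩
      have hmid₂' : cl A (fun u v => R u v ∨ S u v) y₂ z₂ :=
        cl_mono (fun _ _ hx => Or.symm hx) hmid₂
      have hGw₂' : relPow (cl A (fun u v => G R u v ∨ G S u v)) m z₂ w₂ :=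
        relPow_mono (fun _ _ hcl => cl_mono (fun _ _ hx => Or.symm hx) hcl) m z₂ w₂ hGw₂
      have hGc₂' : cl A (fun u v => G R u v ∨ G S u v) w₂ c := by
        apply subset_cl
        by_cases h0 : m % 2 = 0
        · rw [if_pos h0] at hGc₂; exact Or.inl hGc₂
        · rw [if_neg h0] at hGc₂; exact Or.inr hGc₂
      have J2G : relPow (cl A (fun u v => G R u v ∨ G S u v)) (m+1) z₂ c :=
        relPow_snoc m z₂ w₂ c hGw₂' hGc₂'
      -- coordinate 1 : connector from a₁ to b along the chain a₁ .. b (m+1 links)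
      obtain ⟨α₁, β₁, J1F, hmid₁, J1G⟩ :
          ∃ α β, relPow (cl A (fun u v => F R u v ∨ F S u v)) (m+1) a₁ α ∧
            cl A (fun u v => R u v ∨ S u v) α β ∧
            relPow (cl A (fun u v => G R u v ∨ G S u v)) (m+1) β b := by
        cases m with
        | zero =>
            have h2' : comp S (altComp R S 0) a₁ b := h2
            obtain ⟨w, hw, hwb⟩ := h2'
            cases hwb
            exact ⟨a₁, b, ⟨a₁, hclF_refl a₁, rfl⟩, subset_cl (Or.inr hw),
              ⟨b, hclG_refl b, rfl⟩⟩
        | succ k =>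
            obtain ⟨x₁, hx₁, y₁, hFy₁, z₁, hmid₁, w₁, hGw₁, hGb₁⟩ :=
              ih k (by omega) S R hS hR a₁ b h2
            refine ⟨y₁, z₁, ?_, cl_mono (fun _ _ hx => Or.symm hx) hmid₁, ?_⟩
            · refine relPow_pad hclF_refl ⟨x₁, subset_cl (Or.inr hx₁), ?_⟩
              exact relPow_mono (fun _ _ hcl => cl_mono (fun _ _ hx => Or.symm hx) hcl)
                k x₁ y₁ hFy₁
            · refine relPow_pad hclG_refl (relPow_snoc k z₁ w₁ b
                (relPow_mono (fun _ _ hcl => cl_mono (fun _ _ hx => Or.symm hx) hcl)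
                  k z₁ w₁ hGw₁) ?_)
              apply subset_cl
              by_cases h0 : k % 2 = 0
              · rw [if_pos h0] at hGb₁; exact Or.inl hGb₁
              · rw [if_neg h0] at hGb₁; exact Or.inr hGb₁
      -- assemble
      have hLAdm : RAdm A (if (m+1) % 2 = 0 then S else R) := by
        split
        · exact hS
        · exact hR
      refine ⟨tApp A t a a₁ a₁, (ht R hR a a₁ haa₁).1,
              tApp A t y₀ α₁ y₂,
                relPow_tApp (cl_compatible _) (m+1) _ _ _ _ _ _ J0F J1F J2F,
              tApp A t z₀ β₁ z₂,
                tApp_compat (cl_compatible _) hmid₀ hmid₁ hmid₂',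
              tApp A t b b c,
                relPow_tApp (cl_compatible _) (m+1) _ _ _ _ _ _ J0G J1G J2G,
              (ht _ hLAdm b c hL).2⟩

end Aux


/-- Theorem 1(iv): for every `n ≥ 0`,
`R ∘_{n+2} S ⊆ F(R) ∘ (cl(F(R) ∪ F(S)))ⁿ ∘ cl(R ∪ S) ∘ (cl(G(R) ∪ G(S)))ⁿ ∘ G(S•)`,
where `S• = S` if `n` is even and `S• = R` if `n` is odd. -/
theorem stmt3 {σ : Signature} (A : UAAlgebra σ) (F G : Rel A → Rel A)
    (hF : ∀ R, RAdm A R → RAdm A (F R)) (hG : ∀ R, RAdm A R → RAdm A (G R))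
    (t : Term σ 3) (ht : MalcevMod A F G t)
    (n : ℕ) (R S : Rel A) (hR : RAdm A R) (hS : RAdm A S) :
    ∀ a c, altComp R S (n + 2) a c →
      comp (F R)
        (comp (relPow (cl A (fun u v => F R u v ∨ F S u v)) n)
          (comp (cl A (fun u v => R u v ∨ S u v))
            (comp (relPow (cl A (fun u v => G R u v ∨ G S u v)) n)
              (G (if n % 2 = 0 then S else R))))) a c := by
  exact Aux.main A F G hF hG t ht n R S hR hS
end

section
/- Let A be an algebra with a term t Mal'cev modulo F and G. Then for every n ≥ 0 and every reflexive admissible relation R on A: R^{n+1} ⊆ (F(R))^n ∘ R ∘ (G(R))^n, where T^n denotes the n-fold relational composition of T with itself and T^0 is the identity relation. -/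
open Paper

lemma termCompat_s6 {σ : Signature} {A : UAAlgebra σ} {R : Rel A}
    (hR : Compatible A R) : ∀ {n : ℕ} (u : Term σ n) (f g : Fin n → A.carrier),
    (∀ j, R (f j) (g j)) → R (u.eval A f) (u.eval A g) := by
  intro n u
  induction u with
  | var k => intro f g h; exact h k
  | op s args ih => intro f g h; exact hR s _ _ (fun j => ih j f g h)

lemma tAppCompat {σ : Signature} {A : UAAlgebra σ} {R : Rel A}
    (hR : Compatible A R) (t : Term σ 3) {a b c a' b' c' : A.carrier}
    (h1 : R a a') (h2 : R b b') (h3 : R c c') :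
    R (tApp A t a b c) (tApp A t a' b' c') := by
  apply termCompat_s6 hR
  intro j
  fin_cases j <;> simpa [Matrix.cons_val_zero, Matrix.cons_val_one]

lemma relPow_snoc {σ : Signature} {A : UAAlgebra σ} {T : Rel A} :
    ∀ (n : ℕ) {a b c : A.carrier}, relPow T n a b → T b c → relPow T (n+1) a c := by
  intro n
  induction n with
  | zero =>
    intro a b c h1 h2
    exact h1 ▸ ⟨c, h2, rfl⟩
  | succ k ih =>
    rintro a b c ⟨x, hx, hxb⟩ h2
    exact ⟨x, hx, ih hxb h2⟩

lemma lemC {σ : Signature} {A : UAAlgebra σ} {F G : Rel A → Rel A} {t : Term σ 3}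
    (ht : MalcevMod A F G t) {R : Rel A} (hR : RAdm A R) :
    ∀ (m : ℕ) {a b c : A.carrier}, R a b → relPow R (m+1) b c →
      comp (relPow R (m+1)) (G R) (tApp A t a b b) c := by
  intro m
  induction m with
  | zero =>
    intro a b c hab h
    obtain ⟨d, hbd, hdc⟩ := h
    have hdc' : d = c := hdc
    have hbc : R b c := hdc' ▸ hbd
    refine ⟨tApp A t b b c, ⟨tApp A t b b c, ?_, rfl⟩, ?_⟩
    · exact tAppCompat hR.2 t hab (hR.1 b) hbc
    · exact (ht R hR b c hbc).2
  | succ k ih =>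
    intro a b c hab h
    obtain ⟨d, hbd, hdc⟩ := h
    obtain ⟨y, hy, hyc⟩ := ih hbd hdc
    exact ⟨y, ⟨tApp A t b d d, tAppCompat hR.2 t hab hbd hbd, hy⟩, hyc⟩

lemma lemB {σ : Signature} {A : UAAlgebra σ} {F G : Rel A → Rel A} {t : Term σ 3}
    (ht : MalcevMod A F G t) {R : Rel A} (hR : RAdm A R) :
    ∀ (m : ℕ) {a c : A.carrier}, relPow R (m+2) a c →
      comp (F R) (comp (relPow R (m+1)) (G R)) a c := by
  intro m a c h
  obtain ⟨b, hab, hbc⟩ := h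
  exact ⟨tApp A t a b b, (ht R hR a b hab).1, lemC ht hR m hab hbc⟩

lemma lemP {σ : Signature} {A : UAAlgebra σ} {F G : Rel A → Rel A} {t : Term σ 3}
    (ht : MalcevMod A F G t) {R : Rel A} (hR : RAdm A R) :
    ∀ (k m : ℕ) {a c : A.carrier}, relPow R (k + m + 1) a c →
      comp (relPow (F R) k) (comp (relPow R (m+1)) (relPow (G R) k)) a c := by
  intro k
  induction k with
  | zero =>
    intro m a c h
    have h' : relPow R (m + 1) a c := by
      rwa [show 0 + m + 1 = m + 1 by omega] at h
    exact ⟨a, rfl, c, h', rfl⟩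
  | succ k ih =>
    intro m a c h
    have h' : relPow R (k + (m + 1) + 1) a c := by
      rwa [show k + 1 + m + 1 = k + (m + 1) + 1 by omega] at h
    obtain ⟨x, hx, y, hmid, hy⟩ := ih (m + 1) h'
    obtain ⟨u, hxu, v, hv, hvy⟩ := lemB ht hR m hmid
    exact ⟨u, relPow_snoc k hx hxu, v, hv, y, hvy, hy⟩

/-- Theorem 1(vii): `R^{n+1} ⊆ (F(R))ⁿ ∘ R ∘ (G(R))ⁿ` for every `n ≥ 0`. -/
theorem stmt6 {σ : Signature} (A : UAAlgebra σ) (F G : Rel A → Rel A)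
    (hF : ∀ R, RAdm A R → RAdm A (F R)) (hG : ∀ R, RAdm A R → RAdm A (G R))
    (t : Term σ 3) (ht : MalcevMod A F G t)
    (n : ℕ) (R : Rel A) (hR : RAdm A R) :
    ∀ a c, relPow R (n + 1) a c →
      comp (relPow (F R) n) (comp R (relPow (G R) n)) a c := by
  intro a c h
  have h' : relPow R (n + 0 + 1) a c := by
    rwa [show n + 0 + 1 = n + 1 by omega]
  obtain ⟨x, hx, y, hmid, hy⟩ := lemP ht hR n 0 h'
  obtain ⟨z, hz, hzy⟩ := hmid
  have hzy' : z = y := hzy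
  subst hzy'
  exact ⟨x, hx, z, hz, hy⟩
end

section
/- Let A be an algebra with a term t Mal'cev modulo F and G. Then for every reflexive admissible relation R on A: R* ⊆ (F(R))* ∘ R ∘ (G(R))*, where T* denotes the transitive closure of T. -/
namespace Paper

variable {σ : Signature}

section Aux

variable {σ : Signature}

lemma eval_compat {A : UAAlgebra σ} {S : Rel A} (hS : Compatible A S)
    {n : ℕ} (u : Term σ n) (e1 e2 : Fin n → A.carrier) (h : ∀ k, S (e1 k) (e2 k)) :
    S (u.eval A e1) (u.eval A e2) := by
  induction u with
  | var k => exact h k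
  | op s args ih => exact hS s _ _ fun j => ih j

lemma tApp_compat {A : UAAlgebra σ} {S : Rel A} (hS : Compatible A S) (t : Term σ 3)
    {x1 y1 z1 x2 y2 z2 : A.carrier} (hx : S x1 x2) (hy : S y1 y2) (hz : S z1 z2) :
    S (tApp A t x1 y1 z1) (tApp A t x2 y2 z2) := by
  apply eval_compat hS
  intro k
  fin_cases k <;> simpa using by first | exact hx | exact hy | exact hz

/-- `Yf n c` : the "right witness" for the chain `c 0, c 1, ..., c (n+1)`. -/
def Yf (A : UAAlgebra σ) (t : Term σ 3) : ℕ → (ℕ → A.carrier) → A.carrier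
  | 0, c => c 1
  | n + 1, c => tApp A t (Yf A t n c) (Yf A t n c) (Yf A t n (fun i => c (i + 1)))

/-- `Xf n c` : the "left witness" for the chain `c 0, c 1, ..., c (n+1)`. -/
def Xf (A : UAAlgebra σ) (t : Term σ 3) : ℕ → (ℕ → A.carrier) → A.carrier
  | 0, c => c 0
  | n + 1, c => tApp A t (Xf A t n c) (Yf A t n c) (Yf A t n c)

variable {A : UAAlgebra σ} {F G : Rel A → Rel A} {t : Term σ 3} {R : Rel A}

/-- Shift lemma: `Y` of a chain is `R`-related to `Y` of the shifted chain. -/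
lemma Yf_shift (hR : RAdm A R) : ∀ n (c : ℕ → A.carrier), (∀ i < n + 2, R (c i) (c (i + 1))) →
    R (Yf A t n c) (Yf A t n (fun i => c (i + 1))) := by
  intro n
  induction n with
  | zero => intro c hc; exact hc 1 (by omega)
  | succ n ih =>
      intro c hc
      have h1 : R (Yf A t n c) (Yf A t n (fun i => c (i + 1))) :=
        ih c (fun i hi => hc i (by omega))
      have h2 : R (Yf A t n (fun i => c (i + 1)))
          (Yf A t n (fun i => c (i + 1 + 1))) :=
        ih (fun i => c (i + 1)) (fun i hi => hc (i + 1) (by omega))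
      exact tApp_compat hR.2 t h1 h1 h2

lemma Xf_R_Yf (hR : RAdm A R) : ∀ n (c : ℕ → A.carrier), (∀ i < n + 1, R (c i) (c (i + 1))) →
    R (Xf A t n c) (Yf A t n c) := by
  intro n
  induction n with
  | zero => intro c hc; exact hc 0 (by omega)
  | succ n ih =>
      intro c hc
      have h1 : R (Xf A t n c) (Yf A t n c) := ih c (fun i hi => hc i (by omega))
      have h2 : R (Yf A t n c) (Yf A t n (fun i => c (i + 1))) :=
        Yf_shift hR n c hc
      exact tApp_compat hR.2 t h1 (hR.1 _) h2

lemma F_to_Xf (hF : ∀ R, RAdm A R → RAdm A (F R))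
    (ht : MalcevMod A F G t) (hR : RAdm A R) : ∀ n (c : ℕ → A.carrier), (∀ i < n + 1, R (c i) (c (i + 1))) →
    Relation.TransGen (F R) (c 0) (Xf A t n c) := by
  intro n
  induction n with
  | zero =>
      intro c hc
      exact Relation.TransGen.single ((hF R hR).1 _)
  | succ n ih =>
      intro c hc
      have h1 := ih c (fun i hi => hc i (by omega))
      have h2 : R (Xf A t n c) (Yf A t n c) :=
        Xf_R_Yf hR n c (fun i hi => hc i (by omega))
      exact h1.tail (ht R hR _ _ h2).1

lemma Yf_to_G (hG : ∀ R, RAdm A R → RAdm A (G R))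
    (ht : MalcevMod A F G t) (hR : RAdm A R) : ∀ n (c : ℕ → A.carrier), (∀ i < n + 1, R (c i) (c (i + 1))) →
    Relation.TransGen (G R) (Yf A t n c) (c (n + 1)) := by
  intro n
  induction n with
  | zero =>
      intro c hc
      exact Relation.TransGen.single ((hG R hR).1 _)
  | succ n ih =>
      intro c hc
      have h2 : R (Yf A t n c) (Yf A t n (fun i => c (i + 1))) :=
        Yf_shift hR n c hc
      have h1 : Relation.TransGen (G R) (Yf A t n (fun i => c (i + 1))) (c (n + 1 + 1)) :=
        ih (fun i => c (i + 1)) (fun i hi => hc (i + 1) (by omega))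
      exact Relation.TransGen.head (ht R hR _ _ h2).2 h1

/-- Extract a finite chain from a transitive-closure witness. -/
lemma exists_chain {a b : A.carrier} (h : Relation.TransGen R a b) :
    ∃ n : ℕ, ∃ c : ℕ → A.carrier, c 0 = a ∧ c (n + 1) = b ∧
      ∀ i < n + 1, R (c i) (c (i + 1)) := by
  induction h with
  | @single b' hab =>
      refine ⟨0, fun i => if i = 0 then a else b', rfl, rfl, ?_⟩
      intro i hi
      interval_cases i
      simpa using hab
  | @tail b' c' hab hbc ih =>
      obtain ⟨n, c, h0, h1, hch⟩ := ih
      refine ⟨n + 1, fun i => if i ≤ n + 1 then c i else c', by simpa using h0, ?_, ?_⟩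
      · simp
      · intro i hi
        rcases Nat.lt_or_ge i (n + 1) with h | h
        · simpa [Nat.le_of_lt_succ, show i ≤ n + 1 by omega, show i + 1 ≤ n + 1 by omega]
            using hch i h
        · have : i = n + 1 := by omega
          subst this
          simpa [h1] using hbc

end Aux

end Paper



open Paper
/-- Theorem 1(viii): `R* ⊆ (F(R))* ∘ R ∘ (G(R))*` (transitive closures). -/
theorem stmt7 {σ : Signature} (A : UAAlgebra σ) (F G : Rel A → Rel A)
    (hF : ∀ R, RAdm A R → RAdm A (F R)) (hG : ∀ R, RAdm A R → RAdm A (G R))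
    (t : Term σ 3) (ht : MalcevMod A F G t)
    (R : Rel A) (hR : RAdm A R) :
    ∀ a c, Relation.TransGen R a c →
      comp (Relation.TransGen (F R)) (comp R (Relation.TransGen (G R))) a c := by
  intro a c h
  obtain ⟨n, ch, h0, h1, hch⟩ := exists_chain h
  refine ⟨Xf A t n ch, ?_, Yf A t n ch, Xf_R_Yf hR n ch hch, ?_⟩
  · simpa [h0] using F_to_Xf hF ht hR n ch hch
  · simpa [h1] using Yf_to_G hG ht hR n ch hch
end

section
/- Let A be an algebra with a term t Mal'cev modulo F and G. Then for every reflexive admissible relation R on A: R⁻ ⊆ F(R⁻) ∘ R ∘ G(R⁻) and R ⊆ F(R) ∘ R⁻ ∘ G(R), where R⁻ denotes the converse relation of R. -/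
open Paper

lemma term_eval_compat {σ : Signature} (A : UAAlgebra σ) (R : Rel A)
    (hC : Compatible A R) {n : ℕ} (f g : Fin n → A.carrier)
    (h : ∀ k, R (f k) (g k)) : ∀ tm : Paper.Term σ n, R (tm.eval A f) (tm.eval A g)
  | .var k => h k
  | .op s args => hC s _ _ fun j => term_eval_compat A R hC f g h (args j)

/-- Theorem 1(ix): `R⁻ ⊆ F(R⁻) ∘ R ∘ G(R⁻)` and `R ⊆ F(R) ∘ R⁻ ∘ G(R)`. -/
theorem stmt8 {σ : Signature} (A : UAAlgebra σ) (F G : Rel A → Rel A)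
    (hF : ∀ R, RAdm A R → RAdm A (F R)) (hG : ∀ R, RAdm A R → RAdm A (G R))
    (t : Term σ 3) (ht : MalcevMod A F G t)
    (R : Rel A) (hR : RAdm A R) :
    (∀ a c, conv R a c → comp (F (conv R)) (comp R (G (conv R))) a c) ∧
    (∀ a c, R a c → comp (F R) (comp (conv R) (G R)) a c) := by
  have hRc : RAdm A (conv R) := ⟨fun x => hR.1 x, fun s f g h => hR.2 s g f h⟩
  constructor
  · intro a c hac
    obtain ⟨h1, h2⟩ := ht (conv R) hRc a c hac
    refine ⟨tApp A t a c c, h1, tApp A t a a c, ?_, h2⟩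
    exact term_eval_compat A R hR.2 ![a,c,c] ![a,a,c]
      (fun k => by fin_cases k <;> simp [Matrix.cons_val_zero, Matrix.cons_val_one, Matrix.head_cons] <;> [exact hR.1 a; exact hac; exact hR.1 c]) t
  · intro a c hac
    obtain ⟨h1, h2⟩ := ht R hR a c hac
    refine ⟨tApp A t a c c, h1, tApp A t a a c, ?_, h2⟩
    exact term_eval_compat A R hR.2 ![a,a,c] ![a,c,c]
      (fun k => by fin_cases k <;> simp [Matrix.cons_val_zero, Matrix.cons_val_one, Matrix.head_cons] <;> [exact hR.1 a; exact hac; exact hR.1 c]) t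
end

section
/- Let A be an algebra with a term t Mal'cev modulo F and G. Then for all reflexive admissible relations R, S on A: R + S⁻ ⊆ (F(R) + F(S⁻)) ∘ cl(R ∪ S) ∘ (G(R) + G(S⁻)) ⊆ (F(R) + F(S⁻)) ∘ R ∘ S ∘ (G(R) + G(S⁻)), where T⁻ is the converse of T, + is the join R + S = ⋃ₙ R ∘ₙ S, and cl(X) is the least compatible relation containing X. -/
open Paper

namespace StmtAux

variable {σ : Signature}

/-- Terms evaluated at pointwise-related environments are related, for compatible relations. -/
theorem termCompat {A : UAAlgebra σ} {W : Rel A} (hW : Compatible A W) {n : ℕ}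
    (tm : Term σ n) (e1 e2 : Fin n → A.carrier) (h : ∀ i, W (e1 i) (e2 i)) :
    W (tm.eval A e1) (tm.eval A e2) := by
  induction tm with
  | var k => exact h k
  | op s args ih => exact hW s _ _ fun j => ih j

theorem tAppCompat {A : UAAlgebra σ} {W : Rel A} (hW : Compatible A W) (tm : Term σ 3)
    {a a' b b' c c' : A.carrier} (h1 : W a a') (h2 : W b b') (h3 : W c c') :
    W (tApp A tm a b c) (tApp A tm a' b' c') := by
  unfold tApp
  apply termCompat hW
  intro i
  fin_cases i
  · simpa using h1
  · simpa using h2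
  · simpa using h3

theorem convRAdm {A : UAAlgebra σ} {S : Rel A} (hS : RAdm A S) : RAdm A (conv S) :=
  ⟨fun a => hS.1 a, fun s f g h => hS.2 s g f fun j => h j⟩

theorem compCompat {A : UAAlgebra σ} {P Q : Rel A} (hP : Compatible A P)
    (hQ : Compatible A Q) : Compatible A (comp P Q) := by
  intro s f g h
  choose m h1 h2 using h
  exact ⟨A.ops s m, hP s f m h1, hQ s m g h2⟩

theorem altComp_succ {A : UAAlgebra σ} :
    ∀ (n : ℕ) (P Q : Rel A), Reflexive P → Reflexive Q →
      ∀ a b, altComp P Q n a b → altComp P Q (n + 1) a b := by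
  intro n
  induction n with
  | zero =>
    intro P Q hP _ a b h
    cases h
    exact ⟨a, hP a, rfl⟩
  | succ n ih =>
    intro P Q hP hQ a b h
    obtain ⟨y, h1, h2⟩ := h
    exact ⟨y, h1, ih Q P hQ hP _ _ h2⟩

theorem altComp_le {A : UAAlgebra σ} (P Q : Rel A) (hP : Reflexive P) (hQ : Reflexive Q) :
    ∀ m n, n ≤ m → ∀ a b, altComp P Q n a b → altComp P Q m a b := by
  intro m
  induction m with
  | zero =>
    intro n hn a b h
    have : n = 0 := Nat.le_zero.mp hn
    subst this; exact h
  | succ m ih =>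
    intro n hn a b h
    rcases Nat.eq_or_lt_of_le hn with he | hl
    · subst he; exact h
    · exact altComp_succ m P Q hP hQ a b (ih n (Nat.lt_succ_iff.mp hl) a b h)

theorem altComp_compat {A : UAAlgebra σ} :
    ∀ (n : ℕ) (P Q : Rel A), Compatible A P → Compatible A Q →
      Compatible A (altComp P Q n) := by
  intro n
  induction n with
  | zero =>
    intro P Q _ _ s f g h
    show A.ops s f = A.ops s g
    exact congrArg _ (funext h)
  | succ n ih =>
    intro P Q hP hQ s f g h
    choose m h1 h2 using h
    exact ⟨A.ops s m, hP s f m h1, ih Q P hQ hP s m g h2⟩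

theorem join_refl {A : UAAlgebra σ} (P Q : Rel A) : Reflexive (join P Q) :=
  fun _ => ⟨0, rfl⟩

theorem join_left {A : UAAlgebra σ} (P Q : Rel A) {a b : A.carrier} (h : P a b) :
    join P Q a b := ⟨1, b, h, rfl⟩

theorem join_right {A : UAAlgebra σ} (P Q : Rel A) (hP : Reflexive P) {a b : A.carrier}
    (h : Q a b) : join P Q a b := ⟨2, a, hP a, b, h, rfl⟩

theorem altComp_join {A : UAAlgebra σ} :
    ∀ (n : ℕ) (P Q : Rel A), Reflexive P → Reflexive Q → ∀ a b c,
      altComp P Q n a b → join P Q b c → join P Q a c := by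
  intro n
  induction n with
  | zero =>
    intro P Q _ _ a b c h h2
    cases h; exact h2
  | succ n ih =>
    intro P Q hP hQ a b c h h2
    obtain ⟨y, h1, hext⟩ := h
    have h2' : join Q P b c := by
      obtain ⟨m, hm⟩ := h2
      exact ⟨m + 1, b, hQ b, hm⟩
    obtain ⟨m, hm⟩ := ih Q P hQ hP y b c hext h2'
    exact ⟨m + 1, y, h1, hm⟩

theorem join_trans {A : UAAlgebra σ} {P Q : Rel A} (hP : Reflexive P) (hQ : Reflexive Q)
    {a b c : A.carrier} (h1 : join P Q a b) (h2 : join P Q b c) : join P Q a c := by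
  obtain ⟨n, h⟩ := h1
  exact altComp_join n P Q hP hQ a b c h h2

theorem join_compat {A : UAAlgebra σ} {P Q : Rel A} (hP : RAdm A P) (hQ : RAdm A Q) :
    Compatible A (join P Q) := by
  intro s f g h
  choose n hn using h
  refine ⟨Finset.univ.sup n, altComp_compat _ P Q hP.2 hQ.2 s f g fun j => ?_⟩
  exact altComp_le P Q hP.1 hQ.1 _ (n j) (Finset.le_sup (Finset.mem_univ j)) _ _ (hn j)

theorem cl_compat {A : UAAlgebra σ} (base : Rel A) : Compatible A (cl A base) :=
  fun s f g h W hW hb => hW s f g fun j => h j W hW hb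

theorem cl_base {A : UAAlgebra σ} {base : Rel A} {u v : A.carrier} (h : base u v) :
    cl A base u v := fun _ _ hb => hb u v h

/-- Extract an alternating chain from `altComp`. -/
theorem chain_of_altComp {A : UAAlgebra σ} :
    ∀ (n : ℕ) (P Q : Rel A), Reflexive P → Reflexive Q → ∀ a c,
      altComp P Q n a c →
      ∃ x : ℕ → A.carrier, x 0 = a ∧ x n = c ∧
        ∀ j, (if j % 2 = 0 then P else Q) (x j) (x (j + 1)) := by
  intro n
  induction n with
  | zero =>
    intro P Q hP hQ a c h
    cases h
    refine ⟨fun _ => a, rfl, rfl, fun j => ?_⟩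
    split
    · exact hP a
    · exact hQ a
  | succ n ih =>
    intro P Q hP hQ a c h
    obtain ⟨y, h1, h2⟩ := h
    obtain ⟨x', hx0, hxn, hxe⟩ := ih Q P hQ hP y c h2
    refine ⟨fun j => if j = 0 then a else x' (j - 1), by simp, by simp [hxn], ?_⟩
    intro j
    cases j with
    | zero =>
      simpa using (hx0 ▸ h1)
    | succ j =>
      have hthis := hxe j
      have e1 : (if j + 1 = 0 then a else x' (j + 1 - 1)) = x' j := by simp
      have e2 : (if j + 1 + 1 = 0 then a else x' (j + 1 + 1 - 1)) = x' (j + 1) := by simp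
      dsimp only
      rw [e1, e2]
      by_cases hp : j % 2 = 0
      · have hp1 : ¬((j + 1) % 2 = 0) := by omega
        rw [if_pos hp] at hthis
        rw [if_neg hp1]
        exact hthis
      · have hp1 : (j + 1) % 2 = 0 := by omega
        rw [if_neg hp] at hthis
        rw [if_pos hp1]
        exact hthis

/-- Choice function for the interleaved tower construction. -/
def ch (a b : ℕ) : Bool :=
  decide (a + 2 ≤ b) || (decide (b = a + 1) && decide (a % 2 = 1))

theorem ch_iff (a b : ℕ) : ch a b = true ↔ (a + 2 ≤ b ∨ (b = a + 1 ∧ a % 2 = 1)) := by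
  simp [ch]

def na (a b : ℕ) : ℕ := if ch a b then a + 1 else a
def nb (a b : ℕ) : ℕ := if ch a b then b - 1 else b

/-- The F-side tower. -/
def Ut (A : UAAlgebra σ) (tm : Term σ 3) (x : ℕ → A.carrier) : ℕ → ℕ → ℕ → A.carrier
  | 0, a, _ => x a
  | d + 1, a, b =>
    tApp A tm (Ut A tm x d a (nb a b)) (Ut A tm x d (na a b) (nb a b)) (Ut A tm x d (na a b) b)

/-- The G-side tower. -/
def Vt (A : UAAlgebra σ) (tm : Term σ 3) (x : ℕ → A.carrier) : ℕ → ℕ → ℕ → A.carrier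
  | 0, _, b => x b
  | d + 1, a, b =>
    tApp A tm (Vt A tm x d a (nb a b)) (Vt A tm x d (na a b) (nb a b)) (Vt A tm x d (na a b) b)

/-- State invariant guaranteeing good leaves. -/
def Winv (a b d : ℕ) : Prop :=
  (a ≤ b ∧ b ≤ a + d) ∨ (a % 2 = 0 ∧ (b = a + 1 ∨ a = b + 1))

theorem winv_children {a b d : ℕ} (h : Winv a b (d + 1)) :
    Winv a (nb a b) d ∧ Winv (na a b) (nb a b) d ∧ Winv (na a b) b d := by
  by_cases hc : ch a b = true
  · have hc' := (ch_iff a b).mp hc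
    simp only [na, nb, hc, if_true]
    unfold Winv at h ⊢
    omega
  · have hc' : ¬(a + 2 ≤ b ∨ (b = a + 1 ∧ a % 2 = 1)) := fun hh => hc ((ch_iff a b).mpr hh)
    have hcf : ch a b = false := by revert hc; cases ch a b <;> simp
    simp only [na, nb, hcf, Bool.false_eq_true, if_false]
    unfold Winv at h ⊢
    omega

section Main

variable {A : UAAlgebra σ} {F G : Rel A → Rel A} {tm : Term σ 3} {R S : Rel A}

theorem Ut_jF (hF : ∀ R, RAdm A R → RAdm A (F R)) (ht : MalcevMod A F G tm)
    (hR : RAdm A R) (hS : RAdm A S) (x : ℕ → A.carrier)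
    (hx : ∀ j, (if j % 2 = 0 then R else conv S) (x j) (x (j + 1))) :
    ∀ (d a b : ℕ), join (F R) (F (conv S)) (x a) (Ut A tm x d a b) := by
  have hFR := hF R hR
  have hFS := hF (conv S) (convRAdm hS)
  intro d
  induction d with
  | zero => intro a b; exact join_refl _ _ _
  | succ d ih =>
    intro a b
    have key : join (F R) (F (conv S)) (x a)
        (tApp A tm (x a) (x (na a b)) (x (na a b))) := by
      by_cases hc : ch a b = true
      · have hna : na a b = a + 1 := by simp [na, hc]
        rw [hna]
        by_cases hp : a % 2 = 0
        · have he : R (x a) (x (a + 1)) := by have := hx a; rwa [if_pos hp] at this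
          exact join_left _ _ ((ht R hR _ _ he).1)
        · have he : conv S (x a) (x (a + 1)) := by have := hx a; rwa [if_neg hp] at this
          exact join_right _ _ hFR.1 ((ht (conv S) (convRAdm hS) _ _ he).1)
      · have hna : na a b = a := by simp [na, hc]
        rw [hna]
        exact join_left _ _ ((ht R hR _ _ (hR.1 (x a))).1)
    have step := tAppCompat (join_compat hFR hFS) tm
      (ih a (nb a b)) (ih (na a b) (nb a b)) (ih (na a b) b)
    exact join_trans hFR.1 hFS.1 key step

theorem Vt_jG (hG : ∀ R, RAdm A R → RAdm A (G R)) (ht : MalcevMod A F G tm)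
    (hR : RAdm A R) (hS : RAdm A S) (x : ℕ → A.carrier)
    (hx : ∀ j, (if j % 2 = 0 then R else conv S) (x j) (x (j + 1))) :
    ∀ (d a b : ℕ), join (G R) (G (conv S)) (Vt A tm x d a b) (x b) := by
  have hGR := hG R hR
  have hGS := hG (conv S) (convRAdm hS)
  intro d
  induction d with
  | zero => intro a b; exact join_refl _ _ _
  | succ d ih =>
    intro a b
    have key : join (G R) (G (conv S))
        (tApp A tm (x (nb a b)) (x (nb a b)) (x b)) (x b) := by
      by_cases hc : ch a b = true
      · have hc' := (ch_iff a b).mp hc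
        have hb1 : nb a b + 1 = b := by
          simp only [nb, hc, if_true]; omega
        by_cases hp : (nb a b) % 2 = 0
        · have he : R (x (nb a b)) (x b) := by
            have := hx (nb a b); rw [if_pos hp, hb1] at this; exact this
          exact join_left _ _ ((ht R hR _ _ he).2)
        · have he : conv S (x (nb a b)) (x b) := by
            have := hx (nb a b); rw [if_neg hp, hb1] at this; exact this
          exact join_right _ _ hGR.1 ((ht (conv S) (convRAdm hS) _ _ he).2)
      · have hnb : nb a b = b := by simp [nb, hc]
        rw [hnb]
        exact join_left _ _ ((ht R hR _ _ (hR.1 (x b))).2)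
    have step := tAppCompat (join_compat hGR hGS) tm
      (ih a (nb a b)) (ih (na a b) (nb a b)) (ih (na a b) b)
    exact join_trans hGR.1 hGS.1 step key

theorem Ut_Vt_X (hR : RAdm A R) (hS : RAdm A S) (x : ℕ → A.carrier)
    (hx : ∀ j, (if j % 2 = 0 then R else conv S) (x j) (x (j + 1))) :
    ∀ (d a b : ℕ), Winv a b d →
      cl A (fun u v => R u v ∨ S u v) (Ut A tm x d a b) (Vt A tm x d a b) := by
  intro d
  induction d with
  | zero =>
    intro a b h
    show cl A _ (x a) (x b)
    rcases h with ⟨h1, h2⟩ | ⟨h1, h2⟩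
    · have : a = b := le_antisymm h1 (by omega)
      subst this
      exact cl_base (Or.inl (hR.1 (x a)))
    · rcases h2 with h2 | h2
      · subst h2
        have he : R (x a) (x (a + 1)) := by have := hx a; rwa [if_pos h1] at this
        exact cl_base (Or.inl he)
      · subst h2
        have hb : ¬(b % 2 = 0) := by omega
        have he : conv S (x b) (x (b + 1)) := by have := hx b; rwa [if_neg hb] at this
        exact cl_base (Or.inr he)
  | succ d ih =>
    intro a b h
    obtain ⟨h1, h2, h3⟩ := winv_children h
    exact tAppCompat (cl_compat _) tm (ih a (nb a b) h1) (ih (na a b) (nb a b) h2)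
      (ih (na a b) b h3)

end Main

end StmtAux

open StmtAux in
/-- Theorem 1(x): `R + S⁻ ⊆ (F(R)+F(S⁻)) ∘ cl(R ∪ S) ∘ (G(R)+G(S⁻))
⊆ (F(R)+F(S⁻)) ∘ R ∘ S ∘ (G(R)+G(S⁻))`. -/
theorem stmt9 {σ : Signature} (A : UAAlgebra σ) (F G : Rel A → Rel A)
    (hF : ∀ R, RAdm A R → RAdm A (F R)) (hG : ∀ R, RAdm A R → RAdm A (G R))
    (t : Term σ 3) (ht : MalcevMod A F G t)
    (R S : Rel A) (hR : RAdm A R) (hS : RAdm A S) :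
    (∀ a c, join R (conv S) a c →
        comp (join (F R) (F (conv S)))
          (comp (cl A (fun u v => R u v ∨ S u v)) (join (G R) (G (conv S)))) a c) ∧
    (∀ a c, comp (join (F R) (F (conv S)))
          (comp (cl A (fun u v => R u v ∨ S u v)) (join (G R) (G (conv S)))) a c →
        comp (join (F R) (F (conv S))) (comp R (comp S (join (G R) (G (conv S))))) a c) := by
  constructor
  · rintro a c ⟨n, hn⟩
    obtain ⟨x, hx0, hxn, hxe⟩ :=
      chain_of_altComp n R (conv S) hR.1 (convRAdm hS).1 a c hn
    refine ⟨Ut A t x n 0 n, ?_, Vt A t x n 0 n, ?_, ?_⟩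
    · rw [← hx0]
      exact Ut_jF hF ht hR hS x hxe n 0 n
    · exact Ut_Vt_X hR hS x hxe n 0 n (Or.inl ⟨Nat.zero_le n, by omega⟩)
    · rw [← hxn]
      exact Vt_jG hG ht hR hS x hxe n 0 n
  · rintro a c ⟨u, hu, v, hX, hv⟩
    have hcomp : comp R S u v := by
      apply hX (comp R S) (compCompat hR.2 hS.2)
      rintro p q (h | h)
      · exact ⟨q, h, hS.1 q⟩
      · exact ⟨p, hR.1 p, h⟩
    obtain ⟨w, hw1, hw2⟩ := hcomp
    exact ⟨u, hu, w, hw1, v, hw2, hv⟩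
end

section
/- Let V be a variety and F, G monotone global operators on V for reflexive admissible relations satisfying the homomorphism property. If the free algebra X in V on two generators x, y admits a ternary term t with (x, t(x,y,y)) ∈ F_X(S) and (t(x,x,y), y) ∈ G_X(S), where S is the smallest reflexive admissible relation on X containing (x,y), then t is Mal'cev modulo F_A and G_A in every algebra A of V. -/
open Paper

namespace Paper

variable {σ : Signature}

/-- A set of equations (each in some number of variables). -/
abbrev EqTheory (σ : Signature) := Set (Σ n : ℕ, Term σ n × Term σ n)

/-- `A` belongs to the variety axiomatized by `E`. -/
def Satisfies (A : UAAlgebra σ) (E : EqTheory σ) : Prop :=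
  ∀ e ∈ E, ∀ env : Fin e.1 → A.carrier, e.2.1.eval A env = e.2.2.eval A env

/-- Homomorphisms of algebras. -/
structure Hom (A B : UAAlgebra σ) where
  toFun : A.carrier → B.carrier
  map_ops : ∀ s f, toFun (A.ops s f) = B.ops s (toFun ∘ f)

/-- `φ(R)`: the smallest reflexive compatible relation on the codomain containing
`{(φ b, φ c) : b R c}`. -/
def mapRel {A B : UAAlgebra σ} (φ : Hom A B) (R : Rel A) : Rel B :=
  clRefl B (fun x y => ∃ a b, R a b ∧ φ.toFun a = x ∧ φ.toFun b = y)

/-- `X` with distinguished elements `x, y` is the free algebra on two generators in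
the variety of `E`. -/
def IsFree2 (E : EqTheory σ) (X : UAAlgebra σ) (x y : X.carrier) : Prop :=
  Satisfies X E ∧ ∀ A : UAAlgebra σ, Satisfies A E → ∀ a b : A.carrier,
    ∃! φ : Hom X A, φ.toFun x = a ∧ φ.toFun y = b

/-- `X` with `x, y, z` is the free algebra on three generators in the variety of `E`. -/
def IsFree3 (E : EqTheory σ) (X : UAAlgebra σ) (x y z : X.carrier) : Prop :=
  Satisfies X E ∧ ∀ A : UAAlgebra σ, Satisfies A E → ∀ a b c : A.carrier,
    ∃! φ : Hom X A, φ.toFun x = a ∧ φ.toFun y = b ∧ φ.toFun z = c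

/-- A global operator for reflexive admissible relations on the variety of `E`,
mapping reflexive admissible relations to reflexive admissible relations. -/
def GlobalOp (E : EqTheory σ)
    (F : ∀ A : UAAlgebra σ, Satisfies A E → Rel A → Rel A) : Prop :=
  ∀ (A : UAAlgebra σ) (hA : Satisfies A E) (R : Rel A), RAdm A R → RAdm A (F A hA R)

/-- Monotonicity of a global operator. -/
def MonotoneOp (E : EqTheory σ)
    (F : ∀ A : UAAlgebra σ, Satisfies A E → Rel A → Rel A) : Prop :=
  ∀ (A : UAAlgebra σ) (hA : Satisfies A E) (R S : Rel A), RAdm A R → RAdm A S →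
    (∀ a b, R a b → S a b) → ∀ a b, F A hA R a b → F A hA S a b

/-- The homomorphism property: `φ(F_B(R)) ⊆ F_A(φ(R))`. -/
def HomProp (E : EqTheory σ)
    (F : ∀ A : UAAlgebra σ, Satisfies A E → Rel A → Rel A) : Prop :=
  ∀ (B A : UAAlgebra σ) (hB : Satisfies B E) (hA : Satisfies A E) (φ : Hom B A)
    (R : Rel B), RAdm B R →
    ∀ b c, F B hB R b c → F A hA (mapRel φ R) (φ.toFun b) (φ.toFun c)


lemma clRefl_radm {σ : Signature} (A : UAAlgebra σ) (X : Rel A) :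
    RAdm A (clRefl A X) := by
  constructor
  · intro a T hT _ _; exact hT a
  · intro s f g h T h1 h2 h3
    exact h2 s f g (fun j => h j T h1 h2 h3)

lemma hom_eval {σ : Signature} {A B : UAAlgebra σ} (φ : Hom A B) {n : ℕ}
    (env : Fin n → A.carrier) (t : Term σ n) :
    φ.toFun (t.eval A env) = t.eval B (φ.toFun ∘ env) := by
  induction t with
  | var k => rfl
  | op s args ih =>
    simp only [Term.eval, φ.map_ops]
    congr 1; funext j; exact ih j

end Paper
/-- Theorem 3, (iv) ⇒ (i): if in the free algebra `X` of `V` on generators `x, y`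
there is a ternary term `t` with `x F_X(S) t(x,y,y)` and `t(x,x,y) G_X(S) y`, where
`S` is the smallest reflexive admissible relation containing `(x,y)`, then `t` is
Mal'cev modulo `F_A` and `G_A` in every algebra `A` of `V`. -/
theorem stmt15 {σ : Signature} (E : EqTheory σ)
    (F G : ∀ A : UAAlgebra σ, Satisfies A E → Rel A → Rel A)
    (hF : GlobalOp E F) (hG : GlobalOp E G)
    (hFmono : MonotoneOp E F) (hGmono : MonotoneOp E G)
    (hFhom : HomProp E F) (hGhom : HomProp E G)
    (X : UAAlgebra σ) (x y : X.carrier) (hfree : IsFree2 E X x y)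
    (hX : Satisfies X E)
    (t : Term σ 3)
    (htx : F X hX (clRefl X (fun u v => u = x ∧ v = y)) x (tApp X t x y y))
    (hty : G X hX (clRefl X (fun u v => u = x ∧ v = y)) (tApp X t x x y) y) :
    ∀ (A : UAAlgebra σ) (hA : Satisfies A E), MalcevMod A (F A hA) (G A hA) t := by
  intro A hA R hR a b hab
  obtain ⟨φ, ⟨hφx, hφy⟩, -⟩ := hfree.2 A hA a b
  have hS := clRefl_radm X (fun u v => u = x ∧ v = y)
  have hsub : ∀ u v, mapRel φ (clRefl X (fun u v => u = x ∧ v = y)) u v → R u v := by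
    intro u v h
    refine h R hR.1 hR.2 ?_
    rintro p q ⟨c, d, hcd, rfl, rfl⟩
    refine hcd (fun c d => R (φ.toFun c) (φ.toFun d)) (fun _ => hR.1 _) ?_ ?_
    · intro s f g hfg
      rw [φ.map_ops, φ.map_ops]; exact hR.2 s _ _ hfg
    · rintro _ _ ⟨rfl, rfl⟩; rw [hφx, hφy]; exact hab
  have hmRA : RAdm A (mapRel φ (clRefl X (fun u v => u = x ∧ v = y))) :=
    clRefl_radm A _
  have henv1 : φ.toFun ∘ ![x, y, y] = ![a, b, b] := by
    funext j; fin_cases j <;> simp [hφx, hφy]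
  have henv2 : φ.toFun ∘ ![x, x, y] = ![a, a, b] := by
    funext j; fin_cases j <;> simp [hφx, hφy]
  constructor
  · have h1 := hFhom X A hX hA φ _ hS _ _ htx
    have : φ.toFun (tApp X t x y y) = tApp A t a b b := by
      unfold tApp; rw [hom_eval, henv1]
    rw [hφx, this] at h1
    exact hFmono A hA _ R hmRA hR hsub _ _ h1
  · have h1 := hGhom X A hX hA φ _ hS _ _ hty
    have : φ.toFun (tApp X t x x y) = tApp A t a a b := by
      unfold tApp; rw [hom_eval, henv2]
    rw [hφy, this] at h1
    exact hGmono A hA _ R hmRA hR hsub _ _ h1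
end
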